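/- For a finite poset P on p elements, promotion satisfies ∂^p = εε*, where ε is evacuation and ε* is dual evacuation given by ε* = (τ_{p-1}⋯τ₁)(τ_{p-1}⋯τ₂)⋯τ_{p-1}. -/

import Mathlib

open scoped Classical in
/-- The operator `τ` acting at (0-based) positions `i, i+1` of a word: it swaps the
entries in positions `i` and `i+1` if they are incomparable in `α`, and otherwise
fixes the word.  (This is the operator `τ_{i+1}` of the paper, in 1-based indexing.) -/
noncomputable def tauP {α : Type*} [PartialOrder α] (i : ℕ) (l : List α) : List α :=
  if h : i + 1 < l.length then
    if l[i]'(Nat.lt_of_succ_lt h) ≤ l[i + 1]'h ∨ l[i + 1]'h ≤ l[i]'(Nat.lt_of_succ_lt h) then l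
    else (l.set i (l[i + 1]'h)).set (i + 1) (l[i]'(Nat.lt_of_succ_lt h))
  else l

/-- `l` is a linear extension of the finite poset `α`, written as a word:
it lists every element exactly once, and comparable elements appear in order. -/
def IsLinExt {α : Type*} [PartialOrder α] (l : List α) : Prop :=
  l.Nodup ∧ (∀ x : α, x ∈ l) ∧
    ∀ i j : Fin l.length, l.get i < l.get j → (i : ℕ) < (j : ℕ)

/-- Apply a sequence of the operators `τ` (given by their 0-based indices),
left to right. -/
noncomputable def applyTau {α : Type*} [PartialOrder α] (is : List ℕ) (l : List α) : List α :=
  is.foldl (fun acc i => tauP i acc) l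

/-- Indices (0-based) of the promotion operator `∂ = τ₁τ₂⋯τ_{p-1}`. -/
def promoIdx (p : ℕ) : List ℕ := List.range (p - 1)

/-- Indices (0-based) of the evacuation operator
`ε = (τ₁⋯τ_{p-1})(τ₁⋯τ_{p-2})⋯(τ₁τ₂)τ₁`. -/
def evacIdx (p : ℕ) : List ℕ :=
  (((List.range (p - 1)).reverse).map (fun k => List.range (k + 1))).flatten

/-- Indices (0-based) of the dual evacuation operator
`ε* = (τ_{p-1}⋯τ₁)(τ_{p-1}⋯τ₂)⋯τ_{p-1}`. -/
def dualEvacIdx (p : ℕ) : List ℕ :=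
  ((List.range (p - 1)).map (fun k => ((List.range' k (p - 1 - k))).reverse)).flatten


section TauLemmas
variable {α : Type*} [PartialOrder α]


lemma tauP_of_not_lt {i : ℕ} {l : List α} (h : ¬ i + 1 < l.length) : tauP i l = l := by
  simp [tauP, h]

lemma tauP_of_cmp {i : ℕ} {l : List α} (h : i + 1 < l.length)
    (hc : l[i]'(Nat.lt_of_succ_lt h) ≤ l[i+1]'h ∨ l[i+1]'h ≤ l[i]'(Nat.lt_of_succ_lt h)) :
    tauP i l = l := by
  simp [tauP, h, hc]

lemma tauP_of_not_cmp {i : ℕ} {l : List α} (h : i + 1 < l.length)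
    (hc : ¬ (l[i]'(Nat.lt_of_succ_lt h) ≤ l[i+1]'h ∨ l[i+1]'h ≤ l[i]'(Nat.lt_of_succ_lt h))) :
    tauP i l = (l.set i (l[i+1]'h)).set (i+1) (l[i]'(Nat.lt_of_succ_lt h)) := by
  simp [tauP, h, hc]

lemma tauP_length (i : ℕ) (l : List α) : (tauP i l).length = l.length := by
  unfold tauP; split_ifs <;> simp

lemma set_swap_swap {i j : ℕ} (hij : i + 2 ≤ j) (a b c d : α) (l : List α) :
    (((l.set j d).set (j+1) c).set i b).set (i+1) a
      = (((l.set i b).set (i+1) a).set j d).set (j+1) c := by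
  rw [List.set_comm c b (l := l.set j d) (by omega), List.set_comm d b (l := l) (by omega),
      List.set_comm c a (l := (l.set i b).set j d) (by omega), List.set_comm d a (l := l.set i b) (by omega)]

lemma tau_comm' {i j : ℕ} (hij : i + 2 ≤ j) (l : List α) :
    tauP i (tauP j l) = tauP j (tauP i l) := by
  by_cases hj : j + 1 < l.length
  · by_cases hi : i + 1 < l.length
    · by_cases cj : l[j]'(Nat.lt_of_succ_lt hj) ≤ l[j+1]'hj ∨ l[j+1]'hj ≤ l[j]'(Nat.lt_of_succ_lt hj)
      · by_cases ci : l[i]'(Nat.lt_of_succ_lt hi) ≤ l[i+1]'hi ∨ l[i+1]'hi ≤ l[i]'(Nat.lt_of_succ_lt hi)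
        · rw [tauP_of_cmp hi ci, tauP_of_cmp hj cj, tauP_of_cmp hi ci]
        · rw [tauP_of_cmp hj cj, tauP_of_not_cmp hi ci]
          set S := (l.set i (l[i+1]'hi)).set (i+1) (l[i]'(Nat.lt_of_succ_lt hi)) with hS
          have hlen : S.length = l.length := by rw [hS]; simp
          have hj' : j + 1 < S.length := by rw [hlen]; exact hj
          have e1 : S[j]'(Nat.lt_of_succ_lt hj') = l[j]'(Nat.lt_of_succ_lt hj) := by
            simp only [hS, List.getElem_set]
            split_ifs <;> first | rfl | omega
          have e2 : S[j+1]'hj' = l[j+1]'hj := by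
            simp only [hS, List.getElem_set]
            split_ifs <;> first | rfl | omega
          rw [tauP_of_cmp hj' (by rw [e1, e2]; exact cj)]
      · rw [tauP_of_not_cmp hj cj]
        set S := (l.set j (l[j+1]'hj)).set (j+1) (l[j]'(Nat.lt_of_succ_lt hj)) with hS
        have hlen : S.length = l.length := by rw [hS]; simp
        have hi' : i + 1 < S.length := by rw [hlen]; exact hi
        have e1 : S[i]'(Nat.lt_of_succ_lt hi') = l[i]'(Nat.lt_of_succ_lt hi) := by
          simp only [hS, List.getElem_set]
          split_ifs <;> first | rfl | omega
        have e2 : S[i+1]'hi' = l[i+1]'hi := by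
          simp only [hS, List.getElem_set]
          split_ifs <;> first | rfl | omega
        by_cases ci : l[i]'(Nat.lt_of_succ_lt hi) ≤ l[i+1]'hi ∨ l[i+1]'hi ≤ l[i]'(Nat.lt_of_succ_lt hi)
        · rw [tauP_of_cmp hi' (by rw [e1, e2]; exact ci), tauP_of_cmp hi ci, tauP_of_not_cmp hj cj]
        · rw [tauP_of_not_cmp hi' (by rw [e1, e2]; exact ci), tauP_of_not_cmp hi ci]
          set T := (l.set i (l[i+1]'hi)).set (i+1) (l[i]'(Nat.lt_of_succ_lt hi)) with hT
          have hlenT : T.length = l.length := by rw [hT]; simp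
          have hj' : j + 1 < T.length := by rw [hlenT]; exact hj
          have f1 : T[j]'(Nat.lt_of_succ_lt hj') = l[j]'(Nat.lt_of_succ_lt hj) := by
            simp only [hT, List.getElem_set]
            split_ifs <;> first | rfl | omega
          have f2 : T[j+1]'hj' = l[j+1]'hj := by
            simp only [hT, List.getElem_set]
            split_ifs <;> first | rfl | omega
          rw [tauP_of_not_cmp hj' (by rw [f1, f2]; exact cj)]
          rw [e1, e2, f1, f2, hS, hT]
          exact set_swap_swap hij _ _ _ _ l
    · rw [tauP_of_not_lt hi,
        tauP_of_not_lt (show ¬ i + 1 < (tauP j l).length by rw [tauP_length]; exact hi)]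
  · rw [tauP_of_not_lt hj,
      tauP_of_not_lt (show ¬ j + 1 < (tauP i l).length by rw [tauP_length]; exact hj)]

end TauLemmas


def CommN (i j : ℕ) : Prop := i + 2 ≤ j ∨ j + 2 ≤ i

lemma CommN.symm' {i j : ℕ} (h : CommN i j) : CommN j i := h.symm

inductive TraceR : List ℕ → List ℕ → Prop
  | refl (l) : TraceR l l
  | symm {a b} : TraceR a b → TraceR b a
  | trans {a b c} : TraceR a b → TraceR b c → TraceR a c
  | swap (x y) {i j} (h : CommN i j) : TraceR (x ++ i :: j :: y) (x ++ j :: i :: y)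

namespace TraceR

lemma congr_both {a b : List ℕ} (c d : List ℕ) (h : TraceR a b) :
    TraceR (c ++ a ++ d) (c ++ b ++ d) := by
  induction h with
  | refl l => exact .refl _
  | symm _ ih => exact ih.symm
  | trans _ _ ih1 ih2 => exact ih1.trans ih2
  | swap x y h =>
      have := TraceR.swap (c ++ x) (y ++ d) h
      simpa [List.append_assoc] using this

lemma congr_left {a b : List ℕ} (c : List ℕ) (h : TraceR a b) : TraceR (c ++ a) (c ++ b) := by
  simpa using h.congr_both c []

lemma congr_right {a b : List ℕ} (d : List ℕ) (h : TraceR a b) : TraceR (a ++ d) (b ++ d) := by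
  simpa using h.congr_both [] d

lemma append {a b c d : List ℕ} (h1 : TraceR a b) (h2 : TraceR c d) :
    TraceR (a ++ c) (b ++ d) :=
  (h1.congr_right c).trans (h2.congr_left b)

end TraceR

/-- move a letter commuting with `y` from the right of `y` to its left -/
lemma trace_move {c : ℕ} : ∀ (y z : List ℕ), (∀ j ∈ y, CommN c j) →
    TraceR (y ++ c :: z) (c :: (y ++ z)) := by
  intro y
  induction y with
  | nil => intro z _; exact .refl _
  | cons a y ih =>
      intro z hy
      have h1 : TraceR (a :: (y ++ c :: z)) (a :: c :: (y ++ z)) := by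
        simpa using (ih z (fun j hj => hy j (List.mem_cons_of_mem a hj))).congr_left [a]
      have h2 : TraceR (a :: c :: (y ++ z)) (c :: a :: (y ++ z)) := by
        simpa using TraceR.swap [] (y ++ z) ((hy a (List.mem_cons_self (a := a) (l := y))).symm')
      simpa using h1.trans h2

lemma trace_blocks_comm : ∀ (y z : List ℕ), (∀ a ∈ y, ∀ b ∈ z, CommN a b) →
    TraceR (y ++ z) (z ++ y) := by
  intro y
  induction y with
  | nil => intro z _; simpa using TraceR.refl z
  | cons a y ih =>
      intro z hy
      have h1 : TraceR (a :: (y ++ z)) (a :: (z ++ y)) := by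
        simpa using (ih z (fun u hu => hy u (List.mem_cons_of_mem a hu))).congr_left [a]
      have h2 : TraceR (z ++ a :: y) (a :: (z ++ y)) :=
        trace_move z y (fun j hj => hy a (List.mem_cons_self (a := a) (l := y)) j hj)
      simpa using h1.trans h2.symm

lemma trace_interleave (B : ℕ → List ℕ) (c : ℕ → ℕ) :
    ∀ k : ℕ, (∀ t t', t < t' → t' < k → ∀ j ∈ B t', CommN (c t) j) →
    TraceR ((List.range k).flatMap B ++ (List.range k).map c)
      ((List.range k).flatMap (fun t => B t ++ [c t])) := by
  intro k
  induction k with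
  | zero => intro _; exact .refl _
  | succ k ih =>
      intro hc
      rw [List.range_succ, List.flatMap_append, List.flatMap_append, List.map_append]
      simp only [List.flatMap_cons, List.flatMap_nil, List.map_cons, List.map_nil,
        List.append_nil]
      have step1 : TraceR (B k ++ (List.range k).map c) ((List.range k).map c ++ B k) := by
        apply trace_blocks_comm
        intro a ha b hb
        simp only [List.mem_map, List.mem_range] at hb
        obtain ⟨t, ht, rfl⟩ := hb
        exact (hc t k ht (Nat.lt_succ_self k) a ha).symm'
      have step2 := ih (fun t t' h1 h2 => hc t t' h1 (Nat.lt_succ_of_lt h2))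
      have h1 := step1.congr_both ((List.range k).flatMap B) [c k]
      have h3 := step2.congr_right (B k ++ [c k])
      simp only [List.append_assoc] at h1 h3 ⊢
      exact h1.trans h3

/-- descending run `a+k-1, …, a` -/
def descN (a k : ℕ) : List ℕ := (List.range' a k).reverse

/-- the `w`-th column (0-based) of the `m`-row parallelogram heap for `∂^m` on `n` letters -/
def colW (n m w : ℕ) : List ℕ := descN (w + 1 - m) (min (w + 1) n - (w + 1 - m))

/-- column-by-column reading of the parallelogram heap -/
def CCn (n m : ℕ) : List ℕ := (List.range (m + n - 1)).flatMap (colW n m)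

/-- column reading of the staircase -/
def TriN (n : ℕ) : List ℕ := (List.range n).flatMap (fun v => (List.range (v + 1)).reverse)

lemma mem_descN {j a k : ℕ} (h : j ∈ descN a k) : a ≤ j ∧ j < a + k := by
  simp only [descN, List.mem_reverse, List.mem_range'] at h
  obtain ⟨i, hi, rfl⟩ := h
  omega

lemma flatMap_congr {l : List ℕ} {f g : ℕ → List ℕ} (h : ∀ a ∈ l, f a = g a) :
    l.flatMap f = l.flatMap g := by
  rw [List.flatMap_def, List.flatMap_def, List.map_congr_left h]

lemma descN_succ (a L : ℕ) : descN a (L + 1) = descN (a + 1) L ++ [a] := by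
  rw [descN, List.range'_succ, descN]
  simp

lemma colW_one {n w : ℕ} (hw : w < n) : colW n 1 w = [w] := by
  have : min (w + 1) n = w + 1 := by omega
  rw [colW, this]
  have : w + 1 - 1 = w := by omega
  rw [this]
  have : w + 1 - w = 0 + 1 := by omega
  rw [this, descN_succ]
  simp [descN]

lemma colW_eq_of_lt {n M w : ℕ} (hw : w < M) : colW n (M + 1) w = colW n M w := by
  rw [colW, colW]
  congr 1 <;> omega

lemma colW_succ_col {n M t : ℕ} (ht : t < n) (hM : 1 ≤ M) :
    colW n (M + 1) (M + t) = colW n M (M + t) ++ [t] := by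
  have h1 : M + t + 1 - (M + 1) = t := by omega
  have h2 : M + t + 1 - M = t + 1 := by omega
  have h3 : min (M + t + 1) n - t = (min (M + t + 1) n - (t + 1)) + 1 := by omega
  rw [colW, colW, h1, h2, h3, descN_succ]

lemma colW_last (n M : ℕ) (hM : 1 ≤ M) : colW n M (M + n - 1) = [] := by
  have h1 : M + n - 1 + 1 - M = n := by omega
  have h2 : min (M + n - 1 + 1) n - n = 0 := by omega
  rw [colW, h1, h2, descN]
  simp

lemma range_split (M n : ℕ) : List.range (M + n) = List.range M ++ List.range' M n := by
  rw [List.range_eq_range', List.range_eq_range']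
  have := List.range'_append (s := 0) (m := M) (n := n) (step := 1)
  simp only [Nat.zero_add, Nat.one_mul] at this
  rw [← this]

lemma CCn_extend (n M : ℕ) (hM : 1 ≤ M) :
    (List.range (M + n)).flatMap (colW n M) = CCn n M := by
  have h : M + n = (M + n - 1) + 1 := by omega
  rw [CCn, h, List.range_succ, List.flatMap_append]
  simp only [List.flatMap_cons, List.flatMap_nil, List.append_nil]
  rw [← h, colW_last n M hM]
  simp

lemma CCn_step (n M : ℕ) (hM : 1 ≤ M) :
    TraceR (CCn n M ++ List.range n) (CCn n (M + 1)) := by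
  have key := trace_interleave (fun t => colW n M (M + t)) id n (by
    intro t t' h1 h2 j hj
    have := mem_descN (by simpa [colW] using hj)
    left
    simp only [id]
    omega)
  rw [List.map_id] at key
  have e1 : (List.range n).flatMap (fun t => colW n M (M + t))
      = (List.range' M n).flatMap (colW n M) := by
    rw [List.range'_eq_map_range, List.flatMap_map]
  have e2 : CCn n M ++ List.range n
      = (List.range M).flatMap (colW n M) ++
        ((List.range n).flatMap (fun t => colW n M (M + t)) ++ List.range n) := by
    rw [e1, ← List.append_assoc, ← List.flatMap_append, ← range_split, CCn_extend n M hM]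
  have e3 : (List.range M).flatMap (colW n M) ++
      (List.range n).flatMap (fun t => colW n M (M + t) ++ [t]) = CCn n (M + 1) := by
    have h : M + 1 + n - 1 = M + n := by omega
    rw [CCn, h, range_split, List.flatMap_append]
    congr 1
    · exact (flatMap_congr (fun w hw => colW_eq_of_lt (List.mem_range.1 hw))).symm
    · rw [List.range'_eq_map_range, List.flatMap_map]
      refine (flatMap_congr (fun t ht => ?_)).symm
      exact colW_succ_col (List.mem_range.1 ht) hM
  rw [e2, ← e3]
  exact key.congr_left _

lemma lemA (n : ℕ) : ∀ m : ℕ, TraceR ((List.range (m + 1)).flatMap (fun _ => List.range n))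
    (CCn n (m + 1)) := by
  intro m
  induction m with
  | zero =>
      have hCC : CCn n 1 = List.range n := by
        have h : 1 + n - 1 = n := by omega
        rw [CCn, h]
        exact (flatMap_congr fun w hw => colW_one (List.mem_range.1 hw)).trans
          (List.flatMap_singleton' _)
      have h2 : (List.range 1).flatMap (fun _ => List.range n) = List.range n := by
        have : List.range 1 = [0] := by rw [List.range_succ]; simp
        rw [this]; simp
      rw [h2, hCC]
      exact .refl _
  | succ m ih =>
      have h1 : List.range (m + 2) = List.range (m + 1) ++ [m + 1] := by
        rw [List.range_succ]
      rw [h1, List.flatMap_append]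
      simp only [List.flatMap_cons, List.flatMap_nil, List.append_nil]
      exact (ih.congr_right (List.range n)).trans (CCn_step n (m + 1) (by omega))

lemma mem_TriN {j n : ℕ} (h : j ∈ TriN n) : j < n := by
  simp only [TriN, List.mem_flatMap, List.mem_range, List.mem_reverse] at h
  obtain ⟨v, hv, hj⟩ := h
  omega

lemma TriN_succ (n : ℕ) : TriN (n + 1) = TriN n ++ (List.range (n + 1)).reverse := by
  rw [TriN, TriN]
  have h1 : List.range (n + 1) = List.range n ++ [n] := by
    rw [List.range_succ]
  rw [h1, List.flatMap_append]
  simp [List.range_succ]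

lemma lemC : ∀ n : ℕ, TraceR (List.range (n + 1) ++ TriN n)
    (TriN n ++ (List.range (n + 1)).reverse) := by
  intro n
  induction n with
  | zero => simp [TriN]; exact .refl _
  | succ n ih =>
      have h1 : List.range (n + 2) = List.range (n + 1) ++ [n + 1] := by
        rw [List.range_succ]
      have move : TraceR ([n + 1] ++ TriN n) (TriN n ++ [n + 1]) := by
        apply trace_blocks_comm
        intro a ha b hb
        simp only [List.mem_singleton] at ha
        subst ha
        right
        have := mem_TriN hb
        omega
      have step1 : TraceR (List.range (n + 2) ++ TriN (n + 1))
          (List.range (n + 1) ++ (TriN n ++ ([n + 1] ++ (List.range (n + 1)).reverse))) := by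
        rw [h1, TriN_succ]
        have := (move.congr_right ((List.range (n + 1)).reverse)).congr_left (List.range (n + 1))
        simpa [List.append_assoc] using this
      have step2 := ih.congr_right ([n + 1] ++ (List.range (n + 1)).reverse)
      have goalEq : TriN (n + 1) ++ (List.range (n + 2)).reverse
          = TriN n ++ ((List.range (n + 1)).reverse ++ ([n + 1] ++ (List.range (n + 1)).reverse)) := by
        rw [TriN_succ, h1]
        simp [List.append_assoc]
      rw [goalEq]
      simp only [List.append_assoc] at step1 step2 ⊢
      exact step1.trans step2
  
lemma evacIdx_succ (n : ℕ) : evacIdx (n + 2) = List.range (n + 1) ++ evacIdx (n + 1) := by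
  rw [evacIdx, evacIdx]
  have h0 : n + 2 - 1 = n + 1 := by omega
  have h1 : n + 1 - 1 = n := by omega
  rw [h0, h1]
  have h2 : (List.range (n + 1)).reverse = n :: (List.range n).reverse := by
    have : List.range (n + 1) = List.range n ++ [n] := by rw [List.range_succ]
    rw [this]; simp
  rw [h2]
  simp

lemma lemB : ∀ n : ℕ, TraceR (evacIdx (n + 1)) (TriN n) := by
  intro n
  induction n with
  | zero => simp [evacIdx, TriN]; exact .refl _
  | succ n ih =>
      rw [evacIdx_succ, TriN_succ]
      exact ((ih.congr_left (List.range (n + 1)))).trans (lemC n)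

lemma CC_split (n : ℕ) : CCn n (n + 1) = TriN n ++ dualEvacIdx (n + 1) := by
  have h : n + 1 + n - 1 = n + n := by omega
  rw [CCn, h, range_split, List.flatMap_append]
  congr 1
  · rw [TriN]
    refine flatMap_congr (fun w hw => ?_)
    have hw := List.mem_range.1 hw
    have h1 : w + 1 - (n + 1) = 0 := by omega
    have h2 : min (w + 1) n - 0 = w + 1 := by omega
    rw [colW, h1, h2, descN, List.range_eq_range']
  · rw [dualEvacIdx, ← List.flatMap_def]
    have h0 : n + 1 - 1 = n := by omega
    rw [h0, List.range'_eq_map_range, List.flatMap_map]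
    refine flatMap_congr (fun k hk => ?_)
    have hk := List.mem_range.1 hk
    have h1 : n + k + 1 - (n + 1) = k := by omega
    have h2 : min (n + k + 1) n - k = n - k := by omega
    rw [colW, h1, h2, descN]


section Assembly

variable {α : Type*} [PartialOrder α]

lemma tau_comm {i j : ℕ} (hij : CommN i j) (l : List α) :
    tauP i (tauP j l) = tauP j (tauP i l) := by
  rcases hij with h | h
  · exact tau_comm' h l
  · exact (tau_comm' h l).symm

lemma applyTau_append (a b : List ℕ) (l : List α) :
    applyTau (a ++ b) l = applyTau b (applyTau a l) :=
  List.foldl_append (l := a) (l' := b)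

lemma applyTau_trace {a b : List ℕ} (h : TraceR a b) (l : List α) :
    applyTau a l = applyTau b l := by
  induction h generalizing l with
  | refl l => rfl
  | symm _ ih => exact (ih l).symm
  | trans _ _ ih1 ih2 => exact (ih1 l).trans (ih2 l)
  | @swap x y i j hc =>
      rw [applyTau_append x _ l, applyTau_append x _ l]
      show applyTau y (tauP j (tauP i (applyTau x l)))
        = applyTau y (tauP i (tauP j (applyTau x l)))
      rw [tau_comm hc.symm']

lemma iterate_applyTau (n : ℕ) (l : List α) : ∀ m : ℕ,
    (fun x => applyTau (List.range n) x)^[m] l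
      = applyTau ((List.range m).flatMap (fun _ => List.range n)) l := by
  intro m
  induction m with
  | zero => simp [applyTau]
  | succ m ih =>
      rw [Function.iterate_succ_apply']
      have h1 : List.range (m + 1) = List.range m ++ [m] := by rw [List.range_succ]
      rw [h1, List.flatMap_append, applyTau_append, ← ih]
      simp

end Assembly

/-- For a finite poset `P` on `p` elements, `∂^p = εε*`, where `ε` is
evacuation and `ε*` is dual evacuation `(τ_{p-1}⋯τ₁)(τ_{p-1}⋯τ₂)⋯τ_{p-1}`. -/
theorem stmt6 {α : Type*} [Fintype α] [PartialOrder α] (p : ℕ) (hp : p = Fintype.card α)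
    (l : List α) (hl : IsLinExt l) :
    (fun m => applyTau (promoIdx p) m)^[p] l =
      applyTau (dualEvacIdx p) (applyTau (evacIdx p) l) := by
  cases p with
  | zero =>
      simp [promoIdx, evacIdx, dualEvacIdx, applyTau]
  | succ n =>
      have hpromo : promoIdx (n + 1) = List.range n := by
        rw [promoIdx]; congr 1
      rw [hpromo, iterate_applyTau n l (n + 1), ← applyTau_append]
      have key : TraceR ((List.range (n + 1)).flatMap (fun _ => List.range n))
          (evacIdx (n + 1) ++ dualEvacIdx (n + 1)) := by
        refine (lemA n n).trans ?_
        rw [CC_split n]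
        exact ((lemB n).symm).congr_right (dualEvacIdx (n + 1))
      exact applyTau_trace key l
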